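/- For μ ∈ (0,1), the value P = 1/2 + μ − √(1+4μ²)/2 satisfies P − μ(log(1−P) + log P) ≤ 2√μ. -/
import Mathlib

private lemma barrier_aux_key (μ s : ℝ) (hμ0 : 0 < μ) (hμ1 : μ < 1)
    (hs1 : 1 ≤ s) (hs2 : s^2 = 1 + 4*μ^2) :
    μ * (2/3 + (s + 2*μ)/5) ≤ 2*μ - (1/2 + μ - s/2) := by
  have hAB : (s*(15-6*μ))^2 - (15-10*μ+12*μ^2)^2 = 4*μ*(30+119*μ-120*μ^2) := by
    linear_combination (15-6*μ)^2 * hs2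
  have hpos : 0 < 30 + 119*μ - 120*μ^2 := by nlinarith
  have hApos : 0 < s*(15-6*μ) := by nlinarith
  have hgoal : s*(15-6*μ) ≥ 15 - 10*μ + 12*μ^2 := by
    by_contra hc
    push_neg at hc
    have hABpos : 0 < s*(15-6*μ) + (15-10*μ+12*μ^2) := by nlinarith [sq_nonneg μ]
    have hm := mul_pos (sub_pos.mpr hc) hABpos
    nlinarith [mul_pos hμ0 hpos]
  nlinarith [hgoal]

private lemma barrier_aux_A (μ : ℝ) (hμ0 : 0 < μ) :
    -(μ * Real.log μ) ≤ 2 * Real.sqrt μ - 2*μ := by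
  set t : ℝ := Real.sqrt μ with ht_def
  have ht0 : 0 < t := Real.sqrt_pos.mpr hμ0
  have ht2 : t^2 = μ := Real.sq_sqrt hμ0.le
  have hlogt : Real.log μ = 2 * Real.log t := by
    rw [← ht2, Real.log_pow]; push_cast; ring
  have h1 : Real.log t⁻¹ ≤ t⁻¹ - 1 := Real.log_le_sub_one_of_pos (by positivity)
  rw [Real.log_inv] at h1
  have h2 : -(t * Real.log t) ≤ 1 - t := by
    have h3 := mul_le_mul_of_nonneg_left h1 ht0.le
    rw [mul_sub, mul_inv_cancel₀ ht0.ne'] at h3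
    nlinarith
  have h4 : -(μ * Real.log μ) = 2*t*(-(t * Real.log t)) := by
    rw [hlogt, ← ht2]; ring
  rw [h4, ← ht2]
  nlinarith

private lemma barrier_aux_log5 : Real.log 5 ≤ 5/3 := by
  have he : (2.7182818283:ℝ) < Real.exp 1 := Real.exp_one_gt_d9
  have h125 : (125:ℝ) ≤ Real.exp 5 := by
    have he5 : Real.exp 5 = (Real.exp 1)^5 := by
      rw [← Real.exp_nat_mul]; norm_num
    have hb : (2.7182818283:ℝ)^5 < (Real.exp 1)^5 :=
      pow_lt_pow_left₀ he (by norm_num) (by norm_num)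
    have hc : (125:ℝ) ≤ (2.7182818283:ℝ)^5 := by norm_num
    rw [he5]; linarith
  have h1 := (Real.log_le_iff_le_exp (by norm_num : (0:ℝ) < 125)).mpr h125
  have h2 : Real.log (125:ℝ) = 3 * Real.log 5 := by
    rw [show (125:ℝ) = 5^3 by norm_num, Real.log_pow]; push_cast; ring
  linarith

/-- For `μ ∈ (0,1)` and `P = 1/2 + μ − √(1+4μ²)/2`,
`P − μ(log(1−P) + log P) ≤ 2√μ`. -/
theorem barrier_value_bound (μ : ℝ) (hμ : μ ∈ Set.Ioo (0:ℝ) 1) :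
    let P : ℝ := 1/2 + μ - Real.sqrt (1 + 4*μ^2) / 2
    P - μ * (Real.log (1 - P) + Real.log P) ≤ 2 * Real.sqrt μ := by
  obtain ⟨hμ0, hμ1⟩ := hμ
  intro P
  set s : ℝ := Real.sqrt (1 + 4*μ^2) with hs_def
  have hPeq : P = 1/2 + μ - s/2 := rfl
  have hs0 : 0 < s := Real.sqrt_pos.mpr (by nlinarith)
  have hs2 : s^2 = 1 + 4*μ^2 := Real.sq_sqrt (by nlinarith)
  have hs1 : 1 ≤ s := by nlinarith
  have hs2μ : 2*μ < s := by nlinarith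
  have hsu : s < 1 + 2*μ := by nlinarith
  have hP0 : 0 < P := by rw [hPeq]; linarith
  have h1P : 0 < 1 - P := by rw [hPeq]; linarith
  have hprod : (1 - P) * P = μ * (s - 2*μ) := by
    rw [hPeq]; linear_combination (-1/4 : ℝ) * hs2
  have hmul1 : (s - 2*μ) * (s + 2*μ) = 1 := by linear_combination hs2
  have hinv : s - 2*μ = (s + 2*μ)⁻¹ := eq_inv_of_mul_eq_one_left hmul1
  have hlog : Real.log (1 - P) + Real.log P = Real.log μ - Real.log (s + 2*μ) := by
    rw [← Real.log_mul h1P.ne' hP0.ne', hprod,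
      Real.log_mul hμ0.ne' (by nlinarith : s - 2*μ ≠ 0)]
    rw [hinv, Real.log_inv]
    ring
  have tA : -(μ * Real.log μ) ≤ 2 * Real.sqrt μ - 2*μ := barrier_aux_A μ hμ0
  have hx0 : (0:ℝ) < s + 2*μ := by linarith
  have hlx : Real.log (s + 2*μ) ≤ 2/3 + (s + 2*μ)/5 := by
    have h := Real.log_le_sub_one_of_pos (show (0:ℝ) < (s+2*μ)/5 by positivity)
    rw [Real.log_div hx0.ne' (by norm_num)] at h
    linarith [barrier_aux_log5]
  have hkey : μ * (2/3 + (s + 2*μ)/5) ≤ 2*μ - P := by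
    rw [hPeq]; exact barrier_aux_key μ s hμ0 hμ1 hs1 hs2
  have tB : μ * Real.log (s + 2*μ) ≤ 2*μ - P :=
    le_trans (mul_le_mul_of_nonneg_left hlx hμ0.le) hkey
  rw [hlog]
  have hdist : μ * (Real.log μ - Real.log (s + 2*μ))
      = μ * Real.log μ - μ * Real.log (s + 2*μ) := by ring
  rw [hdist]
  linarith
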